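/- arXiv:1612.08982 — 2 statements merged into one kernel-verified Lean document; each statement's English description precedes it below -/
import Mathlib

section
/- Assume 0 < a < b < 1. Let (σ_j) be a sequence of positive numbers with σ_j → 0 and let (s_j) ⊂ (a,b) satisfy s_j ± σ_j ∈ (a,b) and j_{σ_j}(s_j) = 0 for every j. If s_j → s̄ with s̄ ∈ (a,b), then F'(s̄) = 0, where F'(s) = ⟨S(s) − u_d, u^{(1)}(s)⟩ + φ'(s) is the derivative of the reduced cost functional. -/
open Real Filter
open scoped RealInnerProductSpace ENNReal


-- lp norm comparison lemma
lemma lp_norm_le_of_le (x y : lp (fun _ : ℕ => ℝ) 2) {C : ℝ} (hC : 0 ≤ C)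
    (h : ∀ k, |x k| ≤ C * |y k|) : ‖x‖ ≤ C * ‖y‖ := by
  have hp : (0:ℝ) < (2 : ℝ≥0∞).toReal := by norm_num
  rw [← Real.rpow_le_rpow_iff (norm_nonneg _) (by positivity) hp,
    lp.norm_rpow_eq_tsum hp x]
  have hsum : Summable fun k => (C * ‖y k‖) ^ (2:ℝ≥0∞).toReal := by
    have := ((lp.memℓp y).summable hp).mul_left (C ^ (2:ℝ≥0∞).toReal)
    refine this.congr fun k => ?_
    rw [← Real.mul_rpow hC (norm_nonneg _)]
  have h1 : ∑' k, ‖x k‖ ^ (2:ℝ≥0∞).toReal ≤ ∑' k, (C * ‖y k‖) ^ (2:ℝ≥0∞).toReal := by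
    refine Summable.tsum_le_tsum (fun k => ?_) ((lp.memℓp x).summable hp) hsum
    exact Real.rpow_le_rpow (norm_nonneg _) (by simpa [Real.norm_eq_abs] using h k) hp.le
  refine h1.trans_eq ?_
  rw [Real.mul_rpow hC (norm_nonneg _), lp.norm_rpow_eq_tsum hp y, ← tsum_mul_left]
  refine tsum_congr fun k => ?_
  rw [← Real.mul_rpow hC (norm_nonneg _)]

lemma exp_poly_bound {a b lam1 : ℝ} (ha : 0 < a) (hb : b ≤ 1) (hl : 0 < lam1) :
    ∃ C : ℝ, 0 ≤ C ∧ ∀ x : ℝ, lam1 ≤ x → ∀ t ∈ Set.Icc a b,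
      (|Real.log x| + (Real.log x) ^ 2) * Real.exp (-(t * Real.log x)) ≤ C := by
  refine ⟨max (1/a + 4/a^2)
      ((|Real.log lam1| + (Real.log lam1)^2) * Real.exp |Real.log lam1|),
      le_max_of_le_left (by positivity), ?_⟩
  intro x hx t ht
  set L := Real.log x with hLdef
  rcases le_or_gt 0 L with hL | hL
  · refine le_max_of_le_left ?_
    have h1 : Real.exp (-(t * L)) ≤ Real.exp (-(a * L)) :=
      Real.exp_le_exp.mpr (by nlinarith [ht.1])
    have key : (L + L^2) * Real.exp (-(a*L)) ≤ 1/a + 4/a^2 := by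
      have hE : Real.exp (-(a*L)) = (Real.exp (a*L))⁻¹ := Real.exp_neg _
      have hEpos : (0:ℝ) < Real.exp (a*L) := Real.exp_pos _
      have haL : a * L ≤ Real.exp (a*L) := by
        linarith [Real.add_one_le_exp (a*L)]
      have haL2 : (a*L/2)^2 ≤ Real.exp (a*L) := by
        have h2 : a*L/2 ≤ Real.exp (a*L/2) := by
          linarith [Real.add_one_le_exp (a*L/2)]
        have h3 : Real.exp (a*L/2) * Real.exp (a*L/2) = Real.exp (a*L) := by
          rw [← Real.exp_add]; ring_nf
        nlinarith [Real.exp_pos (a*L/2), mul_nonneg (mul_nonneg ha.le hL) (by norm_num : (0:ℝ) ≤ 1/2)]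
      rw [hE, mul_inv_le_iff₀ hEpos, mul_comm _ (Real.exp (a*L))]
      have hL1 : L ≤ Real.exp (a*L) / a := (le_div_iff₀ ha).mpr (by linarith [haL])
      have hL2 : L^2 ≤ 4 * Real.exp (a*L) / a^2 := by
        rw [le_div_iff₀ (by positivity)]
        nlinarith [haL2]
      calc L + L^2 ≤ Real.exp (a*L)/a + 4*Real.exp (a*L)/a^2 := by linarith
        _ = (1/a + 4/a^2) * Real.exp (a*L) := by field_simp
        _ = Real.exp (a*L) * (1/a + 4/a^2) := by ring
    calc (|L| + L^2) * Real.exp (-(t*L))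
        ≤ (L + L^2) * Real.exp (-(a*L)) := by
          rw [abs_of_nonneg hL]
          exact mul_le_mul_of_nonneg_left h1 (by positivity)
      _ ≤ 1/a + 4/a^2 := key
  · refine le_max_of_le_right ?_
    have hM : |L| ≤ |Real.log lam1| := by
      have h1 : Real.log lam1 ≤ L := Real.log_le_log hl hx
      rw [abs_of_neg hL]
      calc -L ≤ -Real.log lam1 := by linarith
        _ ≤ |Real.log lam1| := neg_le_abs _
    have hexp : Real.exp (-(t*L)) ≤ Real.exp |Real.log lam1| := by
      apply Real.exp_le_exp.mpr
      have : -(t*L) = t * (-L) := by ring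
      rw [this]
      calc t * (-L) ≤ 1 * (-L) :=
            mul_le_mul_of_nonneg_right (le_trans ht.2 hb) (by linarith)
        _ = -L := one_mul _
        _ ≤ |L| := by rw [abs_of_neg hL]
        _ ≤ |Real.log lam1| := hM
    have hsq : L^2 ≤ (Real.log lam1)^2 := by
      rw [← sq_abs L, ← sq_abs (Real.log lam1)]
      exact pow_le_pow_left₀ (abs_nonneg _) hM 2
    exact mul_le_mul (by linarith) hexp (Real.exp_pos _).le (by positivity)

/-- Convergence of discrete roots: if `σ_j → 0`, `s_j ∈ (a,b)` are roots of `j_{σ_j}` with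
`s_j ± σ_j ∈ (a,b)`, and `s_j → s̄ ∈ (a,b)`, then `F'(s̄) = 0`, where
`F'(s) = ⟨S(s) − u_d, u¹(s)⟩ + φ'(s)`. -/
theorem roots_converge_to_critical_point (lam1 : ℝ) (hlam1 : 0 < lam1) (lam : ℕ → ℝ)
    (hlam : ∀ k, lam1 ≤ lam k) (f : lp (fun _ : ℕ => ℝ) 2)
    (S u1 : ℝ → lp (fun _ : ℕ => ℝ) 2)
    (hS : ∀ s ∈ Set.Ioo (0 : ℝ) 1, ∀ k, S s k = lam k ^ (-s) * f k)
    (hu1 : ∀ s ∈ Set.Ioo (0 : ℝ) 1, ∀ k,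
      u1 s k = -(Real.log (lam k)) * lam k ^ (-s) * f k)
    (ud : lp (fun _ : ℕ => ℝ) 2)
    (a b : ℝ) (ha : 0 < a) (hab : a < b) (hb : b < 1)
    (φ φ' : ℝ → ℝ) (hφ0 : ∀ s ∈ Set.Ioo a b, 0 ≤ φ s)
    (hφconv : ConvexOn ℝ (Set.Ioo a b) φ)
    (hφd : ∀ s ∈ Set.Ioo a b, HasDerivAt φ (φ' s) s)
    (hφdc : ContinuousOn φ' (Set.Ioo a b))
    (hφa : Tendsto φ (nhdsWithin a (Set.Ioi a)) atTop)
    (hφb : Tendsto φ (nhdsWithin b (Set.Iio b)) atTop)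
    (σ : ℕ → ℝ) (hσpos : ∀ j, 0 < σ j) (hσ0 : Tendsto σ atTop (nhds 0))
    (sj : ℕ → ℝ) (hsj : ∀ j, sj j ∈ Set.Ioo a b)
    (hsjp : ∀ j, sj j + σ j ∈ Set.Ioo a b) (hsjm : ∀ j, sj j - σ j ∈ Set.Ioo a b)
    (hroot : ∀ j,
      ⟪S (sj j) - ud, (2 * σ j)⁻¹ • (S (sj j + σ j) - S (sj j - σ j))⟫ + φ' (sj j) = 0)
    (sbar : ℝ) (hsbar : sbar ∈ Set.Ioo a b)
    (hconv : Tendsto sj atTop (nhds sbar)) :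
    ⟪S sbar - ud, u1 sbar⟫ + φ' sbar = 0 := by
  obtain ⟨C, hC0, hCb⟩ := exp_poly_bound ha hb.le hlam1
  have hlampos : ∀ k, 0 < lam k := fun k => lt_of_lt_of_le hlam1 (hlam k)
  set L : ℕ → ℝ := fun k => Real.log (lam k) with hLdef
  set G : ℕ → ℝ → ℝ := fun k t => Real.exp (-(t * L k)) with hGdef
  have hsub : Set.Ioo a b ⊆ Set.Ioo (0:ℝ) 1 := Set.Ioo_subset_Ioo ha.le hb.le
  have hrpow : ∀ (k : ℕ) (s : ℝ), lam k ^ (-s) = G k s := by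
    intro k s
    rw [Real.rpow_def_of_pos (hlampos k)]
    simp only [hGdef]
    congr 1; ring
  have hG' : ∀ k t, HasDerivAt (G k) (-(L k) * G k t) t := by
    intro k t
    have h1 : HasDerivAt (fun t : ℝ => -(t * L k)) (-(L k)) t := by
      have h0 := ((hasDerivAt_id t).mul_const (L k)).neg
      simp only [id_eq, one_mul] at h0
      exact h0
    have := h1.exp
    simpa [mul_comm] using this
  have hG'' : ∀ k t, HasDerivAt (fun u => -(L k) * G k u) ((L k)^2 * G k t) t := by
    intro k t
    have := (hG' k t).const_mul (-(L k))
    refine this.congr_deriv ?_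
    ring
  have hGpos : ∀ k t, 0 < G k t := fun k t => Real.exp_pos _
  have hbd1 : ∀ (k : ℕ), ∀ t ∈ Set.Icc a b, ‖-(L k) * G k t‖ ≤ C := by
    intro k t ht
    rw [Real.norm_eq_abs, abs_mul, abs_neg, abs_of_pos (hGpos k t)]
    calc |L k| * G k t ≤ (|L k| + (L k)^2) * G k t := by
          apply mul_le_mul_of_nonneg_right _ (hGpos k t).le
          nlinarith [sq_nonneg (L k)]
      _ ≤ C := hCb (lam k) (hlam k) t ht
  have hbd2 : ∀ (k : ℕ), ∀ t ∈ Set.Icc a b, ‖(L k)^2 * G k t‖ ≤ C := by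
    intro k t ht
    rw [Real.norm_eq_abs, abs_mul, abs_of_nonneg (sq_nonneg _), abs_of_pos (hGpos k t)]
    calc (L k)^2 * G k t ≤ (|L k| + (L k)^2) * G k t := by
          apply mul_le_mul_of_nonneg_right _ (hGpos k t).le
          have := abs_nonneg (L k); linarith
      _ ≤ C := hCb (lam k) (hlam k) t ht
  have lip1 : ∀ (k : ℕ), ∀ x ∈ Set.Icc a b, ∀ y ∈ Set.Icc a b,
      |G k y - G k x| ≤ C * |y - x| := by
    intro k x hx y hy
    have := Convex.norm_image_sub_le_of_norm_hasDerivWithin_le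
      (f := G k) (f' := fun t => -(L k) * G k t)
      (fun t _ => (hG' k t).hasDerivWithinAt) (fun t ht => hbd1 k t ht)
      (convex_Icc a b) hx hy
    simpa [Real.norm_eq_abs] using this
  have lip2 : ∀ (k : ℕ), ∀ x ∈ Set.Icc a b, ∀ y ∈ Set.Icc a b,
      |(-(L k) * G k y) - (-(L k) * G k x)| ≤ C * |y - x| := by
    intro k x hx y hy
    have := Convex.norm_image_sub_le_of_norm_hasDerivWithin_le
      (f := fun u => -(L k) * G k u) (f' := fun t => (L k)^2 * G k t)
      (fun t _ => (hG'' k t).hasDerivWithinAt) (fun t ht => hbd2 k t ht)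
      (convex_Icc a b) hx hy
    simpa [Real.norm_eq_abs] using this
  set D : ℕ → lp (fun _ : ℕ => ℝ) 2 :=
    fun j => (2 * σ j)⁻¹ • (S (sj j + σ j) - S (sj j - σ j)) with hDdef
  have habs : Tendsto (fun j => |sj j - sbar|) atTop (nhds 0) := by
    have := tendsto_iff_norm_sub_tendsto_zero.mp hconv
    simpa [Real.norm_eq_abs] using this
  -- coordinate bound for D j - u1 sbar
  have hDbound : ∀ j k, |(D j - u1 sbar) k| ≤ C * (σ j + |sj j - sbar|) * |f k| := by
    intro j k
    have hσj := hσpos j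
    have hs1 : sj j + σ j ∈ Set.Ioo (0:ℝ) 1 := hsub (hsjp j)
    have hs2 : sj j - σ j ∈ Set.Ioo (0:ℝ) 1 := hsub (hsjm j)
    have hsb : sbar ∈ Set.Ioo (0:ℝ) 1 := hsub hsbar
    have hlt : sj j - σ j < sj j + σ j := by linarith
    -- MVT
    obtain ⟨ξ, hξ, hξeq⟩ := exists_hasDerivAt_eq_slope (G k) (fun t => -(L k) * G k t) hlt
      (Continuous.continuousOn (by fun_prop)) (fun t _ => hG' k t)
    have hξab : ξ ∈ Set.Icc a b :=
      ⟨le_of_lt (lt_of_lt_of_le (hsjm j).1 hξ.1.le), (hξ.2.le.trans (hsjp j).2.le)⟩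
    have hcoord : (D j - u1 sbar) k
        = ((-(L k) * G k ξ) - (-(L k) * G k sbar)) * f k := by
      have h1 : (D j - u1 sbar) k = D j k - u1 sbar k := by
        rw [lp.coeFn_sub]; rfl
      have h2 : D j k = (2 * σ j)⁻¹ * (G k (sj j + σ j) * f k - G k (sj j - σ j) * f k) := by
        simp only [hDdef, lp.coeFn_smul, Pi.smul_apply, smul_eq_mul, lp.coeFn_sub, Pi.sub_apply]
        rw [hS _ hs1 k, hS _ hs2 k, hrpow, hrpow]
      have h3 : u1 sbar k = -(L k) * G k sbar * f k := by
        rw [hu1 _ hsb k, hrpow]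
      have h4 : -(L k) * G k ξ = (G k (sj j + σ j) - G k (sj j - σ j)) / (2 * σ j) := by
        rw [hξeq]; congr 1; ring
      rw [h1, h2, h3, h4]
      field_simp
    rw [hcoord, abs_mul]
    have hd : |(-(L k) * G k ξ) - (-(L k) * G k sbar)| ≤ C * (σ j + |sj j - sbar|) := by
      have h5 := lip2 k sbar (Set.mem_Icc_of_Ioo hsbar) ξ hξab
      have h6 : |ξ - sbar| ≤ σ j + |sj j - sbar| := by
        have h7 : |ξ - sj j| ≤ σ j := by
          rw [abs_le]; constructor <;> [linarith [hξ.1]; linarith [hξ.2]]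
        calc |ξ - sbar| = |(ξ - sj j) + (sj j - sbar)| := by ring_nf
          _ ≤ |ξ - sj j| + |sj j - sbar| := abs_add_le _ _
          _ ≤ σ j + |sj j - sbar| := by linarith
      calc |(-(L k) * G k ξ) - (-(L k) * G k sbar)| ≤ C * |ξ - sbar| := h5
        _ ≤ C * (σ j + |sj j - sbar|) := mul_le_mul_of_nonneg_left h6 hC0
    exact mul_le_mul_of_nonneg_right hd (abs_nonneg _)
  -- coordinate bound for S (sj j) - S sbar
  have hSbound : ∀ j k, |(S (sj j) - S sbar) k| ≤ C * |sj j - sbar| * |f k| := by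
    intro j k
    have h1 : (S (sj j) - S sbar) k = (G k (sj j) - G k sbar) * f k := by
      rw [lp.coeFn_sub, Pi.sub_apply, hS _ (hsub (hsj j)) k, hS _ (hsub hsbar) k,
        hrpow, hrpow]
      ring
    rw [h1, abs_mul]
    exact mul_le_mul_of_nonneg_right
      (lip1 k sbar (Set.mem_Icc_of_Ioo hsbar) (sj j) (Set.mem_Icc_of_Ioo (hsj j)))
      (abs_nonneg _)
  -- norm convergence of D
  have hDnorm : ∀ j, ‖D j - u1 sbar‖ ≤ C * (σ j + |sj j - sbar|) * ‖f‖ := fun j =>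
    lp_norm_le_of_le _ f (mul_nonneg hC0 (add_nonneg (hσpos j).le (abs_nonneg _))) (hDbound j)
  have hSnorm : ∀ j, ‖S (sj j) - S sbar‖ ≤ C * |sj j - sbar| * ‖f‖ := fun j =>
    lp_norm_le_of_le _ f (by positivity) (hSbound j)
  have hDlim : Tendsto D atTop (nhds (u1 sbar)) := by
    rw [tendsto_iff_norm_sub_tendsto_zero]
    have hlim : Tendsto (fun j => C * (σ j + |sj j - sbar|) * ‖f‖) atTop (nhds 0) := by
      have := ((tendsto_const_nhds (x := C)).mul (hσ0.add habs)).mul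
        (tendsto_const_nhds (x := ‖f‖))
      simpa using this
    exact squeeze_zero (fun j => norm_nonneg _) hDnorm hlim
  have hSlim : Tendsto (fun j => S (sj j)) atTop (nhds (S sbar)) := by
    rw [tendsto_iff_norm_sub_tendsto_zero]
    have hlim : Tendsto (fun j => C * |sj j - sbar| * ‖f‖) atTop (nhds 0) := by
      have := ((tendsto_const_nhds (x := C)).mul habs).mul (tendsto_const_nhds (x := ‖f‖))
      simpa using this
    exact squeeze_zero (fun j => norm_nonneg _) hSnorm hlim
  have hφlim : Tendsto (fun j => φ' (sj j)) atTop (nhds (φ' sbar)) :=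
    ((hφdc.continuousAt (isOpen_Ioo.mem_nhds hsbar)).tendsto).comp hconv
  have hmain : Tendsto (fun j => ⟪S (sj j) - ud, D j⟫ + φ' (sj j)) atTop
      (nhds (⟪S sbar - ud, u1 sbar⟫ + φ' sbar)) :=
    ((hSlim.sub tendsto_const_nhds).inner hDlim).add hφlim
  have hzero : (fun j => ⟪S (sj j) - ud, D j⟫ + φ' (sj j)) = fun _ => (0:ℝ) :=
    funext fun j => hroot j
  rw [hzero] at hmain
  exact (tendsto_nhds_unique tendsto_const_nhds hmain).symm
end

section
/- Assume 0 < a < b < 1. Let s̄ ∈ (a,b) satisfy F'(s̄) = 0 and suppose there exist ϑ > 0 and δ > 0 such that (F'(s) − F'(s̄))·(s − s̄) ≥ (ϑ/2)|s − s̄|² for all s ∈ (a,b) ∩ (s̄ − δ, s̄ + δ). Then there exists a constant C > 0, depending only on λ₁, ϑ, ‖f‖ and ‖u_d‖, such that: for every σ > 0 and every s_σ ∈ (a,b) ∩ (s̄ − δ, s̄ + δ) with s_σ ± σ ∈ (a,b) and j_σ(s_σ) = 0, one has |s̄ − s_σ| ≤ C · σ² · a^{-3}. -/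
open Real Filter
open scoped RealInnerProductSpace ENNReal

private lemma sinh_le_mul_cosh {t : ℝ} (ht : 0 ≤ t) : Real.sinh t ≤ t * Real.cosh t := by
  have h : MonotoneOn (fun t : ℝ => t * Real.cosh t - Real.sinh t) (Set.Ici 0) := by
    apply monotoneOn_of_deriv_nonneg (convex_Ici 0)
    · fun_prop
    · fun_prop
    · intro x hx
      rw [interior_Ici, Set.mem_Ioi] at hx
      have h1 : HasDerivAt (fun t : ℝ => t * Real.cosh t - Real.sinh t)
          (1 * Real.cosh x + x * Real.sinh x - Real.cosh x) x :=
        ((hasDerivAt_id x).mul (Real.hasDerivAt_cosh x)).sub (Real.hasDerivAt_sinh x)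
      rw [h1.deriv]
      nlinarith [Real.sinh_nonneg_iff.2 hx.le, hx]
  have := h Set.self_mem_Ici (Set.mem_Ici.2 ht) ht
  simpa using this

private lemma cosh_sub_one_le {t : ℝ} (ht : 0 ≤ t) : Real.cosh t - 1 ≤ t * Real.sinh t := by
  have h : MonotoneOn (fun t : ℝ => t * Real.sinh t - Real.cosh t) (Set.Ici 0) := by
    apply monotoneOn_of_deriv_nonneg (convex_Ici 0)
    · fun_prop
    · fun_prop
    · intro x hx
      rw [interior_Ici, Set.mem_Ioi] at hx
      have h1 : HasDerivAt (fun t : ℝ => t * Real.sinh t - Real.cosh t)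
          (1 * Real.sinh x + x * Real.cosh x - Real.sinh x) x :=
        ((hasDerivAt_id x).mul (Real.hasDerivAt_sinh x)).sub (Real.hasDerivAt_cosh x)
      rw [h1.deriv]
      nlinarith [Real.cosh_pos (x := x), hx]
  have := h Set.self_mem_Ici (Set.mem_Ici.2 ht) ht
  simp only [Real.cosh_zero, Real.sinh_zero, zero_mul, zero_sub] at this
  linarith

private lemma abs_sinh_sub_le (t : ℝ) : |Real.sinh t - t| ≤ |t| ^ 3 * Real.cosh t := by
  have key : ∀ u : ℝ, 0 ≤ u → Real.sinh u - u ≤ u ^ 3 * Real.cosh u := by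
    intro u hu
    have h1 := sinh_le_mul_cosh hu
    have h2 := cosh_sub_one_le hu
    have h3 : 0 ≤ Real.sinh u := Real.sinh_nonneg_iff.2 hu
    nlinarith [sq_nonneg u, mul_nonneg hu h3]
  rcases le_total 0 t with ht | ht
  · rw [abs_of_nonneg (by linarith [Real.self_le_sinh_iff.2 ht]), abs_of_nonneg ht]
    exact key t ht
  · have h := key (-t) (by linarith)
    rw [Real.sinh_neg, Real.cosh_neg] at h
    rw [abs_of_nonpos (by nlinarith [Real.sinh_le_self_iff.2 ht] : Real.sinh t - t ≤ 0),
      abs_of_nonpos ht]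
    nlinarith [h]

private lemma cube_le_exp {y : ℝ} (hy : 0 ≤ y) : y ^ 3 ≤ 27 * Real.exp y := by
  have h1 : y / 3 + 1 ≤ Real.exp (y / 3) := by
    have := Real.add_one_le_exp (y / 3); linarith
  have h2 : (y / 3) ^ 3 ≤ (Real.exp (y / 3)) ^ 3 := by
    apply pow_le_pow_left₀ (by positivity)
    linarith
  have h3 : (Real.exp (y / 3)) ^ 3 = Real.exp y := by
    rw [← Real.exp_nat_mul]; ring_nf
  nlinarith [h2, h3]

private lemma logcube_bound {lam1 L a t : ℝ} (hlam1 : 0 < lam1) (hL : lam1 ≤ L)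
    (ha : 0 < a) (ha1 : a < 1) (hta : a ≤ t) (ht1 : t ≤ 1) :
    |Real.log L| ^ 3 * L ^ (-t) ≤ (27 + |Real.log lam1| ^ 3 / lam1) / a ^ 3 := by
  have hLpos : 0 < L := lt_of_lt_of_le hlam1 hL
  have hKa : (0:ℝ) < a ^ 3 := by positivity
  have ha3 : a ^ 3 ≤ 1 := by nlinarith [sq_nonneg a, sq_nonneg (1-a)]
  rcases le_total 1 L with h1L | hL1
  · have hlog : 0 ≤ Real.log L := Real.log_nonneg h1L
    have hmono : L ^ (-t) ≤ L ^ (-a) := Real.rpow_le_rpow_of_exponent_le h1L (by linarith)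
    have hexp : L ^ (-a) = Real.exp (-(a * Real.log L)) := by
      rw [Real.rpow_def_of_pos hLpos]; ring_nf
    set y := a * Real.log L with hy
    have hy0 : 0 ≤ y := mul_nonneg ha.le hlog
    have hcube := cube_le_exp hy0
    have hexppos : 0 < Real.exp (-y) := Real.exp_pos _
    have key : (Real.log L) ^ 3 * Real.exp (-y) ≤ 27 / a ^ 3 := by
      have : y ^ 3 * Real.exp (-y) ≤ 27 := by
        have he := Real.exp_neg y
        have hp := Real.exp_pos y
        rw [he]
        rw [mul_inv_le_iff₀ hp]
        linarith
      have hexpand : y ^ 3 = a ^ 3 * (Real.log L) ^ 3 := by rw [hy]; ring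
      rw [hexpand] at this
      rw [div_eq_inv_mul, ← mul_le_mul_iff_of_pos_left hKa]
      calc a ^ 3 * ((Real.log L) ^ 3 * Real.exp (-y))
          = a ^ 3 * (Real.log L) ^ 3 * Real.exp (-y) := by ring
        _ ≤ 27 := this
        _ = a ^ 3 * ((a^3)⁻¹ * 27) := by field_simp
    have habs : |Real.log L| = Real.log L := abs_of_nonneg hlog
    have hfin : |Real.log L| ^ 3 * L ^ (-t) ≤ 27 / a ^ 3 := by
      rw [habs]
      calc (Real.log L) ^ 3 * L ^ (-t) ≤ (Real.log L) ^ 3 * L ^ (-a) := by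
            apply mul_le_mul_of_nonneg_left hmono (by positivity)
        _ = (Real.log L) ^ 3 * Real.exp (-y) := by rw [hexp]
        _ ≤ 27 / a ^ 3 := key
    have : (0:ℝ) ≤ |Real.log lam1| ^ 3 / lam1 / a ^ 3 := by positivity
    calc |Real.log L| ^ 3 * L ^ (-t) ≤ 27 / a ^ 3 := hfin
      _ ≤ (27 + |Real.log lam1| ^ 3 / lam1) / a ^ 3 := by
          rw [add_div]; linarith
  · have hlog : Real.log L ≤ 0 := Real.log_nonpos hLpos.le hL1
    have hlogmono : Real.log lam1 ≤ Real.log L := Real.log_le_log hlam1 hL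
    have habs : |Real.log L| ≤ |Real.log lam1| := by
      rw [abs_of_nonpos hlog, abs_of_nonpos (by linarith : Real.log lam1 ≤ 0)]
      linarith
    have hrpow : L ^ (-t) ≤ L ^ (-1 : ℝ) :=
      Real.rpow_le_rpow_of_exponent_ge hLpos hL1 (by linarith)
    have hinv : L ^ (-1 : ℝ) = L⁻¹ := Real.rpow_neg_one L
    have hLinv : L⁻¹ ≤ lam1⁻¹ := by
      apply inv_anti₀ hlam1 hL
    have hbound : |Real.log L| ^ 3 * L ^ (-t) ≤ |Real.log lam1| ^ 3 / lam1 := by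
      calc |Real.log L| ^ 3 * L ^ (-t) ≤ |Real.log lam1| ^ 3 * lam1⁻¹ := by
            apply mul_le_mul (pow_le_pow_left₀ (abs_nonneg _) habs 3)
              (le_trans hrpow (by rw [hinv]; exact hLinv))
              (Real.rpow_nonneg hLpos.le _) (by positivity)
        _ = |Real.log lam1| ^ 3 / lam1 := by ring
    have hK : (0:ℝ) ≤ 27 + |Real.log lam1| ^ 3 / lam1 := by positivity
    calc |Real.log L| ^ 3 * L ^ (-t) ≤ |Real.log lam1| ^ 3 / lam1 := hbound
      _ ≤ 27 + |Real.log lam1| ^ 3 / lam1 := by linarith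
      _ ≤ (27 + |Real.log lam1| ^ 3 / lam1) / a ^ 3 := by
          rw [le_div_iff₀ hKa]; nlinarith

private lemma lp_norm_le_of_coord (g h : lp (fun _ : ℕ => ℝ) 2) (c : ℝ) (hc : 0 ≤ c)
    (hb : ∀ k, |g k| ≤ c * |h k|) : ‖g‖ ≤ c * ‖h‖ := by
  have h2 : (0:ℝ) < (2 : ℝ≥0∞).toReal := by norm_num
  apply lp.norm_le_of_tsum_le h2 (mul_nonneg hc (norm_nonneg _))
  have hsumh : Summable fun k => ‖h k‖ ^ (2 : ℝ≥0∞).toReal := (lp.memℓp h).summable h2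
  have hsumg : Summable fun k => ‖g k‖ ^ (2 : ℝ≥0∞).toReal := (lp.memℓp g).summable h2
  have hle : ∀ k, ‖g k‖ ^ (2 : ℝ≥0∞).toReal ≤ c ^ (2 : ℝ≥0∞).toReal * ‖h k‖ ^ (2 : ℝ≥0∞).toReal := by
    intro k
    rw [← Real.mul_rpow hc (norm_nonneg _)]
    exact Real.rpow_le_rpow (norm_nonneg _) (by simpa [Real.norm_eq_abs] using hb k) (by norm_num)
  calc ∑' k, ‖g k‖ ^ (2 : ℝ≥0∞).toReal
      ≤ ∑' k, c ^ (2 : ℝ≥0∞).toReal * ‖h k‖ ^ (2 : ℝ≥0∞).toReal :=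
        Summable.tsum_le_tsum hle hsumg (hsumh.mul_left _)
    _ = c ^ (2 : ℝ≥0∞).toReal * ∑' k, ‖h k‖ ^ (2 : ℝ≥0∞).toReal := tsum_mul_left
    _ = c ^ (2 : ℝ≥0∞).toReal * ‖h‖ ^ (2 : ℝ≥0∞).toReal := by
        rw [lp.norm_rpow_eq_tsum h2]
    _ = (c * ‖h‖) ^ (2 : ℝ≥0∞).toReal := (Real.mul_rpow hc (norm_nonneg _)).symm

set_option maxHeartbeats 1000000 in
/-- Convergence rate in `σ`: if `s̄ ∈ (a,b)` is a critical point of the reduced cost functional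
satisfying the local strong monotonicity condition with constants `ϑ, δ > 0`, then any root
`s_σ` of `j_σ` lying in `(s̄−δ, s̄+δ) ∩ (a,b)` satisfies `|s̄ − s_σ| ≤ C σ² a⁻³`, where `C > 0`
depends only on `λ₁`, `ϑ`, `‖f‖` and `‖u_d‖`. -/
theorem convergence_rate_in_sigma (lam1 : ℝ) (hlam1 : 0 < lam1) (lam : ℕ → ℝ)
    (hlam : ∀ k, lam1 ≤ lam k) (f : lp (fun _ : ℕ => ℝ) 2)
    (S u1 : ℝ → lp (fun _ : ℕ => ℝ) 2)
    (hS : ∀ s ∈ Set.Ioo (0 : ℝ) 1, ∀ k, S s k = lam k ^ (-s) * f k)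
    (hu1 : ∀ s ∈ Set.Ioo (0 : ℝ) 1, ∀ k,
      u1 s k = -(Real.log (lam k)) * lam k ^ (-s) * f k)
    (ud : lp (fun _ : ℕ => ℝ) 2)
    (a b : ℝ) (ha : 0 < a) (hab : a < b) (hb : b < 1)
    (φ φ' : ℝ → ℝ) (hφ0 : ∀ s ∈ Set.Ioo a b, 0 ≤ φ s)
    (hφconv : ConvexOn ℝ (Set.Ioo a b) φ)
    (hφd : ∀ s ∈ Set.Ioo a b, HasDerivAt φ (φ' s) s)
    (hφa : Tendsto φ (nhdsWithin a (Set.Ioi a)) atTop)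
    (hφb : Tendsto φ (nhdsWithin b (Set.Iio b)) atTop)
    (sbar : ℝ) (hsbar : sbar ∈ Set.Ioo a b)
    (hcrit : ⟪S sbar - ud, u1 sbar⟫ + φ' sbar = 0)
    (ϑ δ : ℝ) (hϑ : 0 < ϑ) (hδ : 0 < δ)
    (hmono : ∀ s ∈ Set.Ioo a b, |s - sbar| < δ →
      ϑ / 2 * |s - sbar| ^ 2 ≤
        ((⟪S s - ud, u1 s⟫ + φ' s) - (⟪S sbar - ud, u1 sbar⟫ + φ' sbar)) * (s - sbar)) :
    ∃ C : ℝ, 0 < C ∧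
      ∀ σ : ℝ, 0 < σ → ∀ sσ ∈ Set.Ioo a b, |sσ - sbar| < δ →
        sσ + σ ∈ Set.Ioo a b → sσ - σ ∈ Set.Ioo a b →
        ⟪S sσ - ud, (2 * σ)⁻¹ • (S (sσ + σ) - S (sσ - σ))⟫ + φ' sσ = 0 →
        |sbar - sσ| ≤ C * σ ^ 2 / a ^ 3 := by
  classical
  set K : ℝ := 27 + |Real.log lam1| ^ 3 / lam1 with hKdef
  have hKpos : 0 < K := by positivity
  set M : ℝ := max 1 lam1⁻¹ with hMdef
  have hMpos : (0:ℝ) < M := lt_of_lt_of_le one_pos (le_max_left _ _)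
  set B1 : ℝ := M * ‖f‖ + ‖ud‖ with hB1def
  have hB1nonneg : 0 ≤ B1 := by positivity
  refine ⟨2 / ϑ * B1 * (K * ‖f‖) + 1, by positivity, ?_⟩
  intro σ hσ sσ hsσ hδσ hps hms hroot
  have ha1 : a < 1 := lt_trans hab hb
  have hsub : Set.Ioo a b ⊆ Set.Ioo (0:ℝ) 1 := Set.Ioo_subset_Ioo ha.le hb.le
  have hx01 := hsub hsσ
  have hσ2a3 : (0:ℝ) ≤ σ ^ 2 / a ^ 3 := by positivity
  have hmm := hmono sσ hsσ hδσ
  rw [hcrit, sub_zero] at hmm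
  set v := S sσ - ud with hv
  set w := u1 sσ - (2 * σ)⁻¹ • (S (sσ + σ) - S (sσ - σ)) with hw
  -- rewrite the inner product
  have hPw : ⟪v, u1 sσ⟫ + φ' sσ = ⟪v, w⟫ := by
    have h1 : φ' sσ = -⟪v, (2 * σ)⁻¹ • (S (sσ + σ) - S (sσ - σ))⟫ := by linarith [hroot]
    rw [hw, inner_sub_right, h1]
    ring
  rw [hPw] at hmm
  -- norm of v
  have hvnorm : ‖v‖ ≤ B1 := by
    have hSn : ‖S sσ‖ ≤ M * ‖f‖ := by
      apply lp_norm_le_of_coord _ _ _ hMpos.le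
      intro k
      have hlamk : 0 < lam k := lt_of_lt_of_le hlam1 (hlam k)
      rw [hS sσ hx01 k, abs_mul]
      refine mul_le_mul_of_nonneg_right ?_ (abs_nonneg _)
      rw [abs_of_nonneg (Real.rpow_nonneg hlamk.le _)]
      rcases le_total 1 (lam k) with h1 | h1
      · refine le_trans ?_ (le_max_left 1 lam1⁻¹)
        calc lam k ^ (-sσ) ≤ lam k ^ (0:ℝ) :=
              Real.rpow_le_rpow_of_exponent_le h1 (by linarith [hx01.1])
          _ = 1 := Real.rpow_zero _
      · refine le_trans ?_ (le_max_right 1 lam1⁻¹)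
        calc lam k ^ (-sσ) ≤ lam k ^ (-1:ℝ) :=
              Real.rpow_le_rpow_of_exponent_ge hlamk h1 (by linarith [hx01.2])
          _ = (lam k)⁻¹ := Real.rpow_neg_one _
          _ ≤ lam1⁻¹ := inv_anti₀ hlam1 (hlam k)
    calc ‖v‖ ≤ ‖S sσ‖ + ‖ud‖ := norm_sub_le _ _
      _ ≤ B1 := by rw [hB1def]; linarith
  -- norm of w
  have hwnorm : ‖w‖ ≤ K * σ ^ 2 / a ^ 3 * ‖f‖ := by
    apply lp_norm_le_of_coord _ _ _ (by positivity)
    intro k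
    have hlamk : 0 < lam k := lt_of_lt_of_le hlam1 (hlam k)
    set L := Real.log (lam k) with hLdef
    have e2 : lam k ^ (-(sσ + σ)) = lam k ^ (-sσ) * Real.exp (-(L * σ)) := by
      rw [Real.rpow_def_of_pos hlamk, Real.rpow_def_of_pos hlamk, ← Real.exp_add]
      congr 1; ring
    have e3 : lam k ^ (-(sσ - σ)) = lam k ^ (-sσ) * Real.exp (L * σ) := by
      rw [Real.rpow_def_of_pos hlamk, Real.rpow_def_of_pos hlamk, ← Real.exp_add]
      congr 1; ring
    have hwk : w k = lam k ^ (-sσ) * ((Real.sinh (L * σ) - L * σ) / σ) * f k := by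
      have e1 : w k = u1 sσ k - (2 * σ)⁻¹ * (S (sσ + σ) k - S (sσ - σ) k) := by
        rw [hw, lp.coeFn_sub, Pi.sub_apply, lp.coeFn_smul, Pi.smul_apply, lp.coeFn_sub,
          Pi.sub_apply, smul_eq_mul]
      rw [e1, hu1 sσ hx01 k, hS (sσ + σ) (hsub hps) k, hS (sσ - σ) (hsub hms) k, e2, e3,
        Real.sinh_eq]
      field_simp
      ring
    rw [hwk, abs_mul]
    refine mul_le_mul_of_nonneg_right ?_ (abs_nonneg _)
    -- bound the coefficient
    have hrpos : 0 < lam k ^ (-sσ) := Real.rpow_pos_of_pos hlamk _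
    have h1 : |lam k ^ (-sσ) * ((Real.sinh (L * σ) - L * σ) / σ)|
        = lam k ^ (-sσ) * |Real.sinh (L * σ) - L * σ| / σ := by
      rw [abs_mul, abs_div, abs_of_nonneg hrpos.le, abs_of_nonneg hσ.le]
      ring
    rw [h1]
    have h2 : lam k ^ (-sσ) * |Real.sinh (L * σ) - L * σ| / σ
        ≤ lam k ^ (-sσ) * (|L * σ| ^ 3 * Real.cosh (L * σ)) / σ := by
      gcongr
      exact abs_sinh_sub_le (L * σ)
    refine le_trans h2 ?_
    have h3 : lam k ^ (-sσ) * (|L * σ| ^ 3 * Real.cosh (L * σ)) / σ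
        = σ ^ 2 * (|L| ^ 3 * (lam k ^ (-sσ) * Real.cosh (L * σ))) := by
      rw [abs_mul, abs_of_nonneg hσ.le]
      field_simp
    rw [h3]
    have h4 : lam k ^ (-sσ) * Real.cosh (L * σ)
        = (lam k ^ (-(sσ - σ)) + lam k ^ (-(sσ + σ))) / 2 := by
      rw [Real.cosh_eq, e2, e3]
      ring
    rw [h4]
    have hc1 : |L| ^ 3 * lam k ^ (-(sσ - σ)) ≤ K / a ^ 3 :=
      logcube_bound hlam1 (hlam k) ha ha1 hms.1.le (hms.2.trans hb).le
    have hc2 : |L| ^ 3 * lam k ^ (-(sσ + σ)) ≤ K / a ^ 3 :=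
      logcube_bound hlam1 (hlam k) ha ha1 hps.1.le (hps.2.trans hb).le
    have hKa : K * σ ^ 2 / a ^ 3 = σ ^ 2 * (K / a ^ 3) := by ring
    rw [hKa]
    have hσ2 : (0:ℝ) ≤ σ ^ 2 := sq_nonneg σ
    have : |L| ^ 3 * ((lam k ^ (-(sσ - σ)) + lam k ^ (-(sσ + σ))) / 2) ≤ K / a ^ 3 := by
      have := hc1
      have := hc2
      nlinarith
    exact mul_le_mul_of_nonneg_left this hσ2
  -- Cauchy–Schwarz
  set r := |sσ - sbar| with hr
  have hrnn : 0 ≤ r := abs_nonneg _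
  have hCS : ⟪v, w⟫ * (sσ - sbar) ≤ ‖v‖ * ‖w‖ * r := by
    calc ⟪v, w⟫ * (sσ - sbar) ≤ |⟪v, w⟫ * (sσ - sbar)| := le_abs_self _
      _ = |⟪v, w⟫| * r := by rw [abs_mul]
      _ ≤ ‖v‖ * ‖w‖ * r :=
        mul_le_mul_of_nonneg_right (abs_real_inner_le_norm v w) hrnn
  have hkey : ϑ / 2 * r ^ 2 ≤ ‖v‖ * ‖w‖ * r := le_trans hmm hCS
  rw [abs_sub_comm]
  rcases eq_or_lt_of_le hrnn with h0 | h0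
  · rw [← hr, ← h0]
    positivity
  · have h5 : ϑ / 2 * r ≤ ‖v‖ * ‖w‖ := by
      have h6 : ϑ / 2 * r * r ≤ ‖v‖ * ‖w‖ * r := by nlinarith [hkey]
      exact le_of_mul_le_mul_right h6 h0
    have h7 : r ≤ 2 / ϑ * (‖v‖ * ‖w‖) := by
      have h8 : r = 2 / ϑ * (ϑ / 2 * r) := by field_simp
      rw [h8]
      exact mul_le_mul_of_nonneg_left h5 (by positivity)
    have h9 : ‖v‖ * ‖w‖ ≤ B1 * (K * σ ^ 2 / a ^ 3 * ‖f‖) :=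
      mul_le_mul hvnorm hwnorm (norm_nonneg _) hB1nonneg
    have h10 : 2 / ϑ * (B1 * (K * σ ^ 2 / a ^ 3 * ‖f‖))
        = 2 / ϑ * B1 * (K * ‖f‖) * (σ ^ 2 / a ^ 3) := by ring
    have h11 : r ≤ 2 / ϑ * B1 * (K * ‖f‖) * (σ ^ 2 / a ^ 3) := by
      rw [← h10]
      refine le_trans h7 (mul_le_mul_of_nonneg_left h9 (by positivity))
    have h12 : (2 / ϑ * B1 * (K * ‖f‖) + 1) * σ ^ 2 / a ^ 3
        = 2 / ϑ * B1 * (K * ‖f‖) * (σ ^ 2 / a ^ 3) + σ ^ 2 / a ^ 3 := by ring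
    rw [← hr, h12]
    linarith
end
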